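/- Let n : V → V be a linear endomorphism. For fixed natural numbers r, k, d, the set of complete flags F₁ ⊆ ⋯ ⊆ F_N in V with dim(F_r + nᵏ(F_r)) ≤ d is a Zariski-closed subset of the complete flag variety of V. -/

import Mathlib

open Submodule Module Matrix

/-- Row extraction: an independent family of `m` vectors in `K^N` admits `m` coordinates
on which the corresponding square matrix has nonzero determinant. -/
lemma exists_rows {K : Type*} [Field K] {m N : ℕ} (w : Fin m → (Fin N → K))
    (h : LinearIndependent K w) :
    ∃ t : Fin m → Fin N, (Matrix.of fun i j => w j (t i)).det ≠ 0 := by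
  classical
  set A : Matrix (Fin m) (Fin N) K := Matrix.of fun j i => w j i with hA
  have hAw : (fun j => A j) = w := rfl
  have hrank : A.rank = m := by
    have := (hAw ▸ h : LinearIndependent K fun j => A j).rank_matrix
    simpa using this
  have hT : finrank K (span K (Set.range Aᵀ)) = m := by
    have := Matrix.rank_eq_finrank_span_row Aᵀ
    rw [Matrix.rank_transpose, hrank] at this
    exact this.symm
  obtain ⟨b, hb_sub, hb_span, hb_ind⟩ := exists_linearIndependent K (Set.range Aᵀ)
  have hbfin : b.Finite := hb_ind.setFinite
  haveI : Fintype b := hbfin.fintype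
  have hcard : b.toFinset.card = m := by
    rw [← finrank_span_set_eq_card hb_ind, hb_span, hT]
  have hcard' : Fintype.card b = m := by rwa [Set.toFinset_card] at hcard
  let e : Fin m ≃ b := (Fintype.equivFinOfCardEq hcard').symm
  have hind : LinearIndependent K (fun i : Fin m => ((e i : b) : Fin m → K)) :=
    hb_ind.comp e e.injective
  have hmem : ∀ i : Fin m, ((e i : b) : Fin m → K) ∈ Set.range Aᵀ := fun i => hb_sub (e i).2
  choose t ht using hmem
  refine ⟨t, ?_⟩
  have hrows : LinearIndependent K (fun i => (Matrix.of fun i j => w j (t i)) i) := by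
    have : (fun i => (Matrix.of fun i j => w j (t i)) i) =
        (fun i : Fin m => ((e i : b) : Fin m → K)) := by
      funext i; exact (ht i).symm ▸ rfl
    -- Aᵀ (t i) = fun j => w j (t i)
    have h2 : ∀ i, (Matrix.of fun i j => w j (t i)) i = ((e i : b) : Fin m → K) := by
      intro i; rw [← ht i]; rfl
    exact (funext h2 : _) ▸ hind
  have := Matrix.linearIndependent_rows_iff_isUnit.mp hrows
  exact (Matrix.isUnit_iff_isUnit_det _).mp this |>.ne_zero

/-- Characterization of `finrank (span (range v)) ≤ d` via vanishing of all
`(d+1) × (d+1)` determinants. -/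
lemma finrank_span_le_iff_det {K : Type*} [Field K] {N d : ℕ} {ι : Type*}
    (v : ι → (Fin N → K)) :
    finrank K (span K (Set.range v)) ≤ d ↔
      ∀ (s : Fin (d + 1) → ι) (t : Fin (d + 1) → Fin N),
        (Matrix.of fun i j => v (s j) (t i)).det = 0 := by
  classical
  constructor
  · intro h s t
    by_contra hdet
    have hcols : LinearIndependent K
        (fun j => (Matrix.of fun i j => v (s j) (t i))ᵀ j) :=
      Matrix.linearIndependent_cols_iff_isUnit.mpr
        ((Matrix.isUnit_iff_isUnit_det _).mpr (isUnit_iff_ne_zero.mpr hdet))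
    have hcomp : LinearIndependent K
        ((LinearMap.funLeft K K t) ∘ (v ∘ s)) := by
      convert hcols using 1
      funext j; rfl
    have hvs : LinearIndependent K (v ∘ s) := hcomp.of_comp _
    have h1 : (d + 1 : ℕ) ≤ finrank K (span K (Set.range v)) := by
      have := linearIndependent_iff_card_eq_finrank_span.mp hvs
      simp only [Fintype.card_fin] at this
      rw [this]
      exact Submodule.finrank_mono (span_mono (Set.range_comp_subset_range s v))
    omega
  · intro h
    by_contra hd
    push_neg at hd
    obtain ⟨b, hb_sub, hb_span, hb_ind⟩ := exists_linearIndependent K (Set.range v)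
    have hbfin : b.Finite := hb_ind.setFinite
    haveI : Fintype b := hbfin.fintype
    have hcard : d + 1 ≤ Fintype.card b := by
      have : finrank K (span K b) = b.toFinset.card := finrank_span_set_eq_card hb_ind
      rw [hb_span] at this
      rw [← Set.toFinset_card, ← this]
      omega
    obtain ⟨f⟩ := Function.Embedding.nonempty_of_card_le
      (by simpa using hcard : Fintype.card (Fin (d + 1)) ≤ Fintype.card b)
    have hind : LinearIndependent K (fun i : Fin (d + 1) => ((f i : b) : Fin N → K)) :=
      hb_ind.comp f f.injective
    have hmem : ∀ i, ((f i : b) : Fin N → K) ∈ Set.range v := fun i => hb_sub (f i).2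
    choose s hs using hmem
    obtain ⟨t, ht⟩ := exists_rows (K := K) (fun i => v (s i)) (by
      have : (fun i => v (s i)) = (fun i : Fin (d + 1) => ((f i : b) : Fin N → K)) :=
        funext fun i => hs i
      rw [this]; exact hind)
    exact ht (h s t)

/-- Let `n` be a linear endomorphism of `V = K^N` (`K` algebraically closed). For fixed
`r, k, d`, the condition `dim(F_r + nᵏ(F_r)) ≤ d` on complete flags is Zariski-closed:
parametrizing flags by bases `g` (invertible matrices, with `F_j` the span of the first `j`
columns of `g`), there is a set of polynomials in the matrix entries whose simultaneous
vanishing is equivalent, on the locus of bases, to `dim(F_r + nᵏ(F_r)) ≤ d`. -/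
theorem stmt3 {K : Type*} [Field K] [IsAlgClosed K] (N : ℕ)
    (n : (Fin N → K) →ₗ[K] (Fin N → K)) (r k d : ℕ) :
    ∃ P : Set (MvPolynomial (Fin N × Fin N) K),
      ∀ g : Fin N × Fin N → K,
        IsUnit (Matrix.of fun r' c : Fin N => g (r', c)).det →
        ((Module.finrank K
            ↥(Submodule.span K ((fun c : Fin N => fun r' : Fin N => g (r', c)) '' {c | c.1 < r})
              ⊔ Submodule.map (n ^ k)
                (Submodule.span K
                  ((fun c : Fin N => fun r' : Fin N => g (r', c)) '' {c | c.1 < r}))) ≤ d)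
          ↔ ∀ f ∈ P, MvPolynomial.eval g f = 0) := by
  classical
  set A : Matrix (Fin N) (Fin N) K := LinearMap.toMatrix' (n ^ k) with hA
  set ι := ({c : Fin N // c.1 < r} ⊕ {c : Fin N // c.1 < r}) with hι
  -- polynomial entries
  set Ent : ι → Fin N → MvPolynomial (Fin N × Fin N) K :=
    Sum.elim (fun c i => MvPolynomial.X (i, c.1))
      (fun c i => ∑ m : Fin N, MvPolynomial.C (A i m) * MvPolynomial.X (m, c.1)) with hEnt
  refine ⟨Set.range (fun p : (Fin (d + 1) → ι) × (Fin (d + 1) → Fin N) =>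
      (Matrix.of fun i j => Ent (p.1 j) (p.2 i)).det), ?_⟩
  intro g _
  -- the family of generating vectors
  set col : Fin N → (Fin N → K) := fun c => fun r' => g (r', c) with hcol
  set v : ι → (Fin N → K) := Sum.elim (fun c => col c.1) (fun c => (n ^ k) (col c.1)) with hv
  have heval : ∀ (x : ι) (i : Fin N), MvPolynomial.eval g (Ent x i) = v x i := by
    rintro (c | c) i
    · simp [hEnt, hv, hcol]
    · simp only [hEnt, hv, Sum.elim_inr, map_sum, _root_.map_mul, MvPolynomial.eval_C,
        MvPolynomial.eval_X]
      have : (n ^ k) (col c.1) = A.mulVec (col c.1) := by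
        rw [hA, ← Matrix.toLin'_apply, Matrix.toLin'_toMatrix']
      rw [this]
      simp [Matrix.mulVec, dotProduct, hcol]
  -- the submodule is the span of `range v`
  have hspan : Submodule.span K (col '' {c | c.1 < r})
      ⊔ Submodule.map (n ^ k) (Submodule.span K (col '' {c | c.1 < r}))
      = Submodule.span K (Set.range v) := by
    rw [Submodule.map_span, ← Submodule.span_union]
    congr 1
    rw [hv, Set.Sum.elim_range]
    congr 1
    · exact Set.image_eq_range _ _
    · rw [Set.image_image]; exact Set.image_eq_range _ _
  rw [show ((fun c : Fin N => fun r' : Fin N => g (r', c)) '' {c | c.1 < r}) =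
      col '' {c | c.1 < r} from rfl, hspan, finrank_span_le_iff_det v]
  constructor
  · rintro h f ⟨⟨s, t⟩, rfl⟩
    have := h s t
    calc MvPolynomial.eval g (Matrix.of fun i j => Ent (s j) (t i)).det
        = ((Matrix.of fun i j => Ent (s j) (t i)).map (MvPolynomial.eval g)).det := by
          rw [RingHom.map_det]; rfl
      _ = (Matrix.of fun i j => v (s j) (t i)).det := by
          congr 1; ext i j; exact heval (s j) (t i)
      _ = 0 := this
  · intro h s t
    have := h _ ⟨(s, t), rfl⟩
    calc (Matrix.of fun i j => v (s j) (t i)).det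
        = ((Matrix.of fun i j => Ent (s j) (t i)).map (MvPolynomial.eval g)).det := by
          congr 1; ext i j; exact (heval (s j) (t i)).symm
      _ = MvPolynomial.eval g (Matrix.of fun i j => Ent (s j) (t i)).det := by
          rw [RingHom.map_det]; rfl
      _ = 0 := this
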